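/- The function f : ℝ^m → ℝ defined by f(β) = E[|⟨K, β⟩|] is differentiable at β₀ with gradient ∇f(β₀) = E[sign(⟨K, β₀⟩)·K]. -/

import Mathlib

open MeasureTheory ProbabilityTheory Metric
open scoped InnerProductSpace

lemma myRealSign_hasDerivAt {c : ℝ} (hc : c ≠ 0) :
    HasDerivAt (fun x : ℝ => |x|) (Real.sign c) c := by
  rcases hc.lt_or_gt with h | h
  · rw [Real.sign_of_neg h]; exact hasDerivAt_abs_neg h
  · rw [Real.sign_of_pos h]; exact hasDerivAt_abs_pos h

lemma myAbsSign (x : ℝ) : |Real.sign x| ≤ 1 := by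
  rcases lt_trichotomy x 0 with h | h | h
  · simp [Real.sign_of_neg h]
  · simp [h, Real.sign_zero]
  · simp [Real.sign_of_pos h]

lemma measurable_realSign : Measurable Real.sign := by
  unfold Real.sign
  exact Measurable.ite measurableSet_Iio measurable_const
    (Measurable.ite measurableSet_Ioi measurable_const measurable_const)

/-- if `E[|K|] < ∞` and `P(⟨K, β₀⟩ = 0) = 0`, then `f(β) = E[|⟨K, β⟩|]` is
differentiable at `β₀` with gradient `∇f(β₀) = E[sign(⟨K, β₀⟩)·K]`. -/
theorem stmt13 {Ω : Type*} [MeasurableSpace Ω] (P : Measure Ω) [IsProbabilityMeasure P]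
    {m : ℕ} (hm : 0 < m) (K : Ω → EuclideanSpace ℝ (Fin m))
    (hKint : Integrable K P)
    (β₀ : EuclideanSpace ℝ (Fin m)) (h0 : P {ω | ⟪K ω, β₀⟫_ℝ = 0} = 0) :
    HasGradientAt (fun β : EuclideanSpace ℝ (Fin m) => ∫ ω, |⟪K ω, β⟫_ℝ| ∂P)
      (∫ ω, Real.sign ⟪K ω, β₀⟫_ℝ • K ω ∂P) β₀ := by
  have hK : AEStronglyMeasurable K P := hKint.1
  have hsgn : AEStronglyMeasurable (fun ω => Real.sign ⟪K ω, β₀⟫_ℝ) P := by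
    have h1 : AEMeasurable (fun ω => ⟪K ω, β₀⟫_ℝ) P :=
      (hK.inner aestronglyMeasurable_const).aemeasurable
    exact (measurable_realSign.comp_aemeasurable h1).aestronglyMeasurable
  set F' : Ω → EuclideanSpace ℝ (Fin m) →L[ℝ] ℝ :=
    fun ω => Real.sign ⟪K ω, β₀⟫_ℝ • (innerSL ℝ (K ω)) with hF'def
  have hF'meas : AEStronglyMeasurable F' P :=
    hsgn.smul ((innerSL ℝ (E := EuclideanSpace ℝ (Fin m))).continuous.comp_aestronglyMeasurable hK)
  have hFmeas : ∀ β : EuclideanSpace ℝ (Fin m),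
      AEStronglyMeasurable (fun ω => |⟪K ω, β⟫_ℝ|) P := fun β =>
    continuous_abs.comp_aestronglyMeasurable (hK.inner aestronglyMeasurable_const)
  have hFint : Integrable (fun ω => |⟪K ω, β₀⟫_ℝ|) P := by
    refine (hKint.norm.const_mul ‖β₀‖).mono' (hFmeas β₀) ?_
    filter_upwards with ω
    rw [norm_abs_eq_norm]
    calc ‖⟪K ω, β₀⟫_ℝ‖ ≤ ‖K ω‖ * ‖β₀‖ := norm_inner_le_norm _ _
    _ = ‖β₀‖ * ‖K ω‖ := mul_comm _ _
  have hlip : ∀ᵐ ω ∂P, LipschitzOnWith (Real.nnabs ‖K ω‖)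
      (fun β => |⟪K ω, β⟫_ℝ|) (ball β₀ 1) := by
    filter_upwards with ω
    refine LipschitzWith.lipschitzOnWith ?_
    refine LipschitzWith.of_dist_le_mul fun x y => ?_
    rw [Real.dist_eq]
    have h1 : |(|⟪K ω, x⟫_ℝ|) - (|⟪K ω, y⟫_ℝ|)| ≤ |⟪K ω, x⟫_ℝ - ⟪K ω, y⟫_ℝ| :=
      abs_abs_sub_abs_le_abs_sub _ _
    refine h1.trans ?_
    calc |⟪K ω, x⟫_ℝ - ⟪K ω, y⟫_ℝ| = ‖⟪K ω, x - y⟫_ℝ‖ := by rw [inner_sub_right]; rfl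
    _ ≤ ‖K ω‖ * ‖x - y‖ := norm_inner_le_norm _ _
    _ = (Real.nnabs ‖K ω‖ : ℝ) * dist x y := by
        rw [dist_eq_norm, Real.coe_nnabs, abs_of_nonneg (norm_nonneg _)]
  have hdiff : ∀ᵐ ω ∂P, HasFDerivAt (fun β => |⟪K ω, β⟫_ℝ|) (F' ω) β₀ := by
    rw [ae_iff]
    refine measure_mono_null ?_ h0
    intro ω hω
    simp only [Set.mem_setOf_eq] at hω ⊢
    by_contra hc
    exact hω ((myRealSign_hasDerivAt hc).comp_hasFDerivAt β₀ ((innerSL ℝ (K ω)).hasFDerivAt))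
  obtain ⟨hF'int, hder⟩ := hasFDerivAt_integral_of_dominated_loc_of_lip
    (hs := ball_mem_nhds β₀ one_pos) (Filter.Eventually.of_forall fun β => hFmeas β) hFint hF'meas hlip
    hKint.norm hdiff
  rw [hasGradientAt_iff_hasFDerivAt]
  have hint : Integrable (fun ω => Real.sign ⟪K ω, β₀⟫_ℝ • K ω) P := by
    refine hKint.norm.mono' (hsgn.smul hK) ?_
    filter_upwards with ω
    rw [norm_smul]
    calc ‖Real.sign ⟪K ω, β₀⟫_ℝ‖ * ‖K ω‖ ≤ 1 * ‖K ω‖ :=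
      mul_le_mul_of_nonneg_right (myAbsSign _) (norm_nonneg _)
    _ = ‖K ω‖ := one_mul _
  have key : InnerProductSpace.toDual ℝ (EuclideanSpace ℝ (Fin m))
      (∫ ω, Real.sign ⟪K ω, β₀⟫_ℝ • K ω ∂P) = ∫ ω, F' ω ∂P := by
    have h2 := (innerSL ℝ (E := EuclideanSpace ℝ (Fin m))).integral_comp_comm hint
    have h3 : InnerProductSpace.toDual ℝ (EuclideanSpace ℝ (Fin m))
        (∫ ω, Real.sign ⟪K ω, β₀⟫_ℝ • K ω ∂P)
        = innerSL ℝ (∫ ω, Real.sign ⟪K ω, β₀⟫_ℝ • K ω ∂P) := by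
      ext y
      simp [InnerProductSpace.toDual_apply_apply]
    rw [h3, ← h2]
    refine integral_congr_ae (Filter.Eventually.of_forall fun ω => ?_)
    rw [hF'def]
    simp [_root_.map_smul]
  rw [key]
  exact hder
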